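/- For every γ ≥ 2 and n ≥ 3γ, there exists a graph G on n vertices without isolated vertices with domination number γ, a unique minimum dominating set D that is perfectly dominating (D is independent and every vertex outside D has exactly one neighbor in D), and exactly C(n−γ, 2) − γ(γ−2) edges. -/

import Mathlib

set_option maxHeartbeats 2000000
open Finset

def IsDomSet {V : Type*} (G : SimpleGraph V) (D : Finset V) : Prop :=
  ∀ v, v ∉ D → ∃ u ∈ D, G.Adj u v

def IsUMDS {V : Type*} (G : SimpleGraph V) (D : Finset V) : Prop :=
  IsDomSet G D ∧ (∀ D', IsDomSet G D' → D.card ≤ D'.card) ∧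
    (∀ D', IsDomSet G D' → D'.card = D.card → D' = D)

def Lrel (g x y : ℕ) : Prop :=
  (x < g ∧ y = g + x) ∨ (x < g ∧ y = 2*g + x) ∨ (x + 1 = g ∧ 3*g ≤ y) ∨
  (g ≤ x ∧ x < y ∧ y < 2*g) ∨
  (g ≤ x ∧ x < 2*g ∧ 2*g ≤ y ∧ y < 3*g ∧ y < x + g) ∨
  (g ≤ x ∧ x < 2*g ∧ 3*g ≤ y) ∨
  (2*g ≤ x ∧ x + 1 < 3*g ∧ 3*g ≤ y) ∨
  (3*g ≤ x ∧ x < y)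

instance (g x y : ℕ) : Decidable (Lrel g x y) := by unfold Lrel; infer_instance

def Gg (g n : ℕ) : SimpleGraph (Fin n) where
  Adj u v := u ≠ v ∧ (Lrel g u.val v.val ∨ Lrel g v.val u.val)
  symm := ⟨fun u v h => ⟨h.1.symm, h.2.symm⟩⟩
  loopless := ⟨fun u h => h.1 rfl⟩

instance (g n : ℕ) : DecidableRel (Gg g n).Adj := fun u v =>
  inferInstanceAs (Decidable (u ≠ v ∧ (Lrel g u.val v.val ∨ Lrel g v.val u.val)))

lemma Gg_adj {g n : ℕ} {u v : Fin n} :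
    (Gg g n).Adj u v ↔ u ≠ v ∧ (Lrel g u.val v.val ∨ Lrel g v.val u.val) := Iff.rfl

def cellF (g v : ℕ) : ℕ :=
  if v < g then v else if v < 2*g then v - g else if v < 3*g then v - 2*g else g - 1

lemma cellF_lt {g : ℕ} (hg : 1 ≤ g) (v : ℕ) : cellF g v < g := by
  unfold cellF; split_ifs <;> omega

lemma Lrel_lower {g x y : ℕ} (hy : y < g) : ¬ Lrel g x y := by unfold Lrel; omega

lemma LrelD {g x y : ℕ} (hx : x < g) (h : Lrel g x y) : g ≤ y ∧ cellF g y = x := by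
  unfold Lrel at h; unfold cellF; split_ifs <;> omega

/-- if u is a d-vertex adjacent to v, then v is outside D and in u's cell -/
lemma adj_d {g n : ℕ} {u v : Fin n} (hu : u.val < g) (h : (Gg g n).Adj u v) :
    g ≤ v.val ∧ cellF g v.val = u.val := by
  rcases h with ⟨hne, h | h⟩
  · exact LrelD hu h
  · exact absurd h (Lrel_lower hu)

/-- d-vertex of a cell dominates each vertex of the cell -/
lemma dom_d {g n : ℕ} (hg : 1 ≤ g) (hn : 3*g ≤ n) {v : Fin n} (hv : g ≤ v.val) :
    (Gg g n).Adj ⟨cellF g v.val, by have := cellF_lt (g := g) hg v.val; omega⟩ v := by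
  refine ⟨?_, Or.inl ?_⟩
  · have := cellF_lt (g := g) hg v.val
    intro hEq
    have : cellF g v.val = v.val := congrArg Fin.val hEq
    omega
  · show Lrel g (cellF g v.val) v.val
    unfold Lrel cellF
    have := v.isLt
    split_ifs <;> omega

lemma exists_cell {g n : ℕ} (hg : 1 ≤ g) (hn : 3*g ≤ n) {D' : Finset (Fin n)}
    (hdom : IsDomSet (Gg g n) D') {i : ℕ} (hi : i < g) :
    ∃ u ∈ D', cellF g u.val = i := by
  set di : Fin n := ⟨i, by omega⟩ with hdi
  by_cases hmem : di ∈ D'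
  · exact ⟨di, hmem, by simp [hdi, cellF, hi]⟩
  · obtain ⟨u, hu, hadj⟩ := hdom di hmem
    rcases hadj with ⟨hne, h | h⟩
    · exact absurd h (Lrel_lower (by simpa [hdi] using hi))
    · -- Lrel g i u.val with i < g
      obtain ⟨_, hc⟩ := LrelD (x := i) (by simpa [hdi] using hi) h
      exact ⟨u, hu, hc⟩

lemma card_lower {g n : ℕ} (hg : 1 ≤ g) (hn : 3*g ≤ n) {D' : Finset (Fin n)}
    (hdom : IsDomSet (Gg g n) D') : g ≤ D'.card := by
  have hsub : Finset.range g ⊆ D'.image (fun u => cellF g u.val) := by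
    intro i hi
    simp only [Finset.mem_range] at hi
    obtain ⟨u, hu, hc⟩ := exists_cell hg hn hdom hi
    exact Finset.mem_image.mpr ⟨u, hu, hc⟩
  calc g = (Finset.range g).card := (Finset.card_range g).symm
    _ ≤ (D'.image (fun u => cellF g u.val)).card := Finset.card_le_card hsub
    _ ≤ D'.card := Finset.card_image_le

lemma card_filter_val (n : ℕ) (p : ℕ → Prop) [DecidablePred p] :
    ((Finset.univ : Finset (Fin n)).filter (fun v => p v.val)).card
      = ((Finset.range n).filter p).card := by
  rw [show Finset.range n = Finset.Iio n from by ext; simp, ← Fin.map_valEmbedding_univ,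
    Finset.filter_map, Finset.card_map]
  rfl

lemma cardD {g n : ℕ} (hgn : g ≤ n) :
    ((Finset.univ : Finset (Fin n)).filter (fun v => v.val < g)).card = g := by
  rw [card_filter_val n (fun x => x < g), show (Finset.range n).filter (fun x => x < g) = Finset.range g from by
    ext x; simp only [Finset.mem_filter, Finset.mem_range]; omega, Finset.card_range]

lemma unique_min {g n : ℕ} (hg : 2 ≤ g) (hn : 3*g ≤ n) {D' : Finset (Fin n)}
    (hdom : IsDomSet (Gg g n) D') (hcard : D'.card = g) :
    D' = Finset.univ.filter (fun v : Fin n => v.val < g) := by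
  have himg : D'.image (fun u => cellF g u.val) = Finset.range g := by
    apply Finset.Subset.antisymm
    · intro x hx
      obtain ⟨u, _, rfl⟩ := Finset.mem_image.mp hx
      exact Finset.mem_range.mpr (cellF_lt (by omega) u.val)
    · intro i hi
      obtain ⟨u, hu, hc⟩ := exists_cell (by omega) hn hdom (Finset.mem_range.mp hi)
      exact Finset.mem_image.mpr ⟨u, hu, hc⟩
  have hinj : Set.InjOn (fun u : Fin n => cellF g u.val) ↑D' :=
    Finset.card_image_iff.mp (by rw [himg, Finset.card_range, hcard])
  have huniq : ∀ u ∈ D', ∀ w ∈ D', cellF g u.val = cellF g w.val → u = w :=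
    fun u hu w hw h => hinj hu hw h
  have hsub : D' ⊆ Finset.univ.filter (fun v : Fin n => v.val < g) := by
    intro v hv
    refine Finset.mem_filter.mpr ⟨Finset.mem_univ v, ?_⟩
    by_contra hvg
    push_neg at hvg
    set A' := D'.filter (fun u : Fin n => (g ≤ u.val ∧ u.val < 2*g) ∨ 3*g ≤ u.val) with hA'
    by_cases hA : A'.Nonempty
    · -- there is a deviant of type a or f; take max cell
      have hne : (A'.image (fun u => cellF g u.val)).Nonempty := hA.image _
      obtain ⟨K, hK⟩ : ∃ K, (A'.image (fun u => cellF g u.val)).max' hne = K := ⟨_, rfl⟩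
      obtain ⟨u₀, hu₀A, hu₀c⟩ := Finset.mem_image.mp (Finset.max'_mem _ hne)
      rw [hK] at hu₀c
      have hu₀D : u₀ ∈ D' := (Finset.mem_filter.mp hu₀A).1
      have hu₀t : (g ≤ u₀.val ∧ u₀.val < 2*g) ∨ 3*g ≤ u₀.val := (Finset.mem_filter.mp hu₀A).2
      have hKlt : K < g := by rw [← hu₀c]; exact cellF_lt (by omega) u₀.val
      have hmax : ∀ w ∈ A', cellF g w.val ≤ K := by
        intro w hw
        rw [← hK]
        exact Finset.le_max' (A'.image (fun u => cellF g u.val)) _ (Finset.mem_image_of_mem _ hw)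
      set bK : Fin n := ⟨2*g + K, by omega⟩ with hbK
      have hbval : bK.val = 2*g + K := rfl
      have hbKnot : bK ∉ D' := by
        intro hmem
        have h1 : cellF g bK.val = K := by rw [hbval]; unfold cellF; split_ifs <;> omega
        have h2 := huniq bK hmem u₀ hu₀D (h1.trans hu₀c.symm)
        have hval : (2*g + K : ℕ) = u₀.val := by rw [← hbval, h2]
        omega
      obtain ⟨u, huD, hadj⟩ := hdom bK hbKnot
      rcases hadj with ⟨hne2, hL | hL⟩
      · rw [hbval] at hL
        unfold Lrel at hL
        rcases hL with h|h|h|h|h|h|h|h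
        · omega
        · -- u is the d-vertex of cell K : contradicts injectivity with u₀
          have hc : cellF g u.val = K := by unfold cellF; split_ifs <;> omega
          have h2 := huniq u huD u₀ hu₀D (hc.trans hu₀c.symm)
          have hval : u.val = u₀.val := by rw [h2]
          omega
        · omega
        · omega
        · -- u is an a-vertex with cell > K : contradicts maximality
          have huA : u ∈ A' := Finset.mem_filter.mpr ⟨huD, Or.inl ⟨h.1, h.2.1⟩⟩
          have hle := hmax u huA
          unfold cellF at hle; split_ifs at hle <;> omega
        · omega
        · omega
        · omega
      · rw [hbval] at hL
        unfold Lrel at hL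
        rcases hL with h|h|h|h|h|h|h|h
        · omega
        · omega
        · omega
        · omega
        · omega
        · omega
        · -- u is a filler : contradicts maximality since K < g-1
          have huA : u ∈ A' := Finset.mem_filter.mpr ⟨huD, Or.inr h.2.2⟩
          have hle := hmax u huA
          unfold cellF at hle; split_ifs at hle <;> omega
        · omega
    · -- no deviant of type a or f; v is a b-type deviant; take min cell
      have hAe : ∀ u ∈ D', ¬((g ≤ u.val ∧ u.val < 2*g) ∨ 3*g ≤ u.val) := by
        intro u hu hc
        exact hA ⟨u, Finset.mem_filter.mpr ⟨hu, hc⟩⟩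
      have hvb : 2*g ≤ v.val ∧ v.val < 3*g := by have := hAe v hv; omega
      set B' := D'.filter (fun u : Fin n => 2*g ≤ u.val) with hB'
      have hB : B'.Nonempty := ⟨v, Finset.mem_filter.mpr ⟨hv, hvb.1⟩⟩
      have hne : (B'.image (fun u => cellF g u.val)).Nonempty := hB.image _
      obtain ⟨I, hI⟩ : ∃ I, (B'.image (fun u => cellF g u.val)).min' hne = I := ⟨_, rfl⟩
      obtain ⟨u₀, hu₀B, hu₀c⟩ := Finset.mem_image.mp (Finset.min'_mem _ hne)
      rw [hI] at hu₀c
      have hu₀D : u₀ ∈ D' := (Finset.mem_filter.mp hu₀B).1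
      have hu₀t : 2*g ≤ u₀.val := (Finset.mem_filter.mp hu₀B).2
      have hu₀lt : u₀.val < 3*g := by have := hAe u₀ hu₀D; omega
      have hu₀cc : u₀.val = 2*g + I := by
        rw [← hu₀c]; unfold cellF; split_ifs <;> omega
      have hIlt : I < g := by rw [← hu₀c]; exact cellF_lt (by omega) u₀.val
      have hmin : ∀ w ∈ B', I ≤ cellF g w.val := by
        intro w hw
        rw [← hI]
        exact Finset.min'_le (B'.image (fun u => cellF g u.val)) _ (Finset.mem_image_of_mem _ hw)
      set aI : Fin n := ⟨g + I, by omega⟩ with haI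
      have haval : aI.val = g + I := rfl
      have haInot : aI ∉ D' := by
        intro hmem
        have := hAe aI hmem
        rw [haval] at this
        omega
      obtain ⟨u, huD, hadj⟩ := hdom aI haInot
      rcases hadj with ⟨hne2, hL | hL⟩
      · rw [haval] at hL
        unfold Lrel at hL
        rcases hL with h|h|h|h|h|h|h|h
        · -- u is the d-vertex of cell I : contradicts injectivity with u₀
          have hc : cellF g u.val = I := by unfold cellF; split_ifs <;> omega
          have h2 := huniq u huD u₀ hu₀D (hc.trans hu₀c.symm)
          have hval : u.val = u₀.val := by rw [h2]
          omega
        · omega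
        · omega
        · -- u is an a-vertex : contradicts A' empty
          have := hAe u huD; omega
        · omega
        · omega
        · omega
        · omega
      · rw [haval] at hL
        unfold Lrel at hL
        rcases hL with h|h|h|h|h|h|h|h
        · omega
        · omega
        · omega
        · have := hAe u huD; omega
        · -- u is a b-vertex with cell < I : contradicts minimality
          have huB : u ∈ B' := Finset.mem_filter.mpr ⟨huD, h.2.2.1⟩
          have hle := hmin u huB
          unfold cellF at hle; split_ifs at hle <;> omega
        · have := hAe u huD; omega
        · omega
        · omega
  exact Finset.eq_of_subset_of_card_le hsub (by rw [cardD (by omega), hcard])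

lemma lr1 {g x y : ℕ} (h1 : x < g) (h2 : y = g + x) : Lrel g x y := Or.inl ⟨h1, h2⟩
lemma lr2 {g x y : ℕ} (h1 : x < g) (h2 : y = 2*g + x) : Lrel g x y := Or.inr (Or.inl ⟨h1, h2⟩)
lemma lr3 {g x y : ℕ} (h1 : x + 1 = g) (h2 : 3*g ≤ y) : Lrel g x y :=
  Or.inr (Or.inr (Or.inl ⟨h1, h2⟩))
lemma lr4 {g x y : ℕ} (h1 : g ≤ x) (h2 : x < y) (h3 : y < 2*g) : Lrel g x y :=
  Or.inr (Or.inr (Or.inr (Or.inl ⟨h1, h2, h3⟩)))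
lemma lr5 {g x y : ℕ} (h1 : g ≤ x) (h2 : x < 2*g) (h3 : 2*g ≤ y) (h4 : y < 3*g)
    (h5 : y < x + g) : Lrel g x y := Or.inr (Or.inr (Or.inr (Or.inr (Or.inl ⟨h1, h2, h3, h4, h5⟩))))
lemma lr6 {g x y : ℕ} (h1 : g ≤ x) (h2 : x < 2*g) (h3 : 3*g ≤ y) : Lrel g x y :=
  Or.inr (Or.inr (Or.inr (Or.inr (Or.inr (Or.inl ⟨h1, h2, h3⟩)))))
lemma lr7 {g x y : ℕ} (h1 : 2*g ≤ x) (h2 : x + 1 < 3*g) (h3 : 3*g ≤ y) : Lrel g x y :=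
  Or.inr (Or.inr (Or.inr (Or.inr (Or.inr (Or.inr (Or.inl ⟨h1, h2, h3⟩))))))
lemma lr8 {g x y : ℕ} (h1 : 3*g ≤ x) (h2 : x < y) : Lrel g x y :=
  Or.inr (Or.inr (Or.inr (Or.inr (Or.inr (Or.inr (Or.inr ⟨h1, h2⟩))))))

section chars
variable {g V y : ℕ}

lemma char_d1 (hg : 2 ≤ g) (h : V + 1 < g) :
    (Lrel g V y ∨ Lrel g y V) ↔ (y = g + V ∨ y = 2*g + V) := by
  constructor
  · rintro (h'|h') <;> (unfold Lrel at h'; omega)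
  · rintro (rfl|rfl)
    · exact Or.inl (lr1 (by omega) rfl)
    · exact Or.inl (lr2 (by omega) rfl)

lemma char_d2 (hg : 2 ≤ g) (h : V + 1 = g) :
    (Lrel g V y ∨ Lrel g y V) ↔ (y = g + V ∨ y = 2*g + V ∨ 3*g ≤ y) := by
  constructor
  · rintro (h'|h') <;> (unfold Lrel at h'; omega)
  · rintro (rfl|rfl|h')
    · exact Or.inl (lr1 (by omega) rfl)
    · exact Or.inl (lr2 (by omega) rfl)
    · exact Or.inl (lr3 h h')

lemma char_a (hg : 2 ≤ g) (h1 : g ≤ V) (h2 : V < 2*g) :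
    (Lrel g V y ∨ Lrel g y V) ↔
      (y = V - g ∨ (g ≤ y ∧ y < 2*g ∧ y ≠ V) ∨ (2*g ≤ y ∧ y < V + g) ∨ 3*g ≤ y) := by
  constructor
  · rintro (h'|h') <;> (unfold Lrel at h'; omega)
  · rintro (rfl|⟨ha, hb, hc⟩|⟨ha, hb⟩|h')
    · exact Or.inr (lr1 (by omega) (by omega))
    · rcases Nat.lt_or_ge y V with hlt | hge
      · exact Or.inr (lr4 ha hlt h2)
      · exact Or.inl (lr4 h1 (by omega) hb)
    · exact Or.inl (lr5 h1 h2 ha (by omega) hb)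
    · exact Or.inl (lr6 h1 h2 h')

lemma char_b1 (hg : 2 ≤ g) (h1 : 2*g ≤ V) (h2 : V + 1 < 3*g) :
    (Lrel g V y ∨ Lrel g y V) ↔
      (y = V - 2*g ∨ (g ≤ y ∧ y < 2*g ∧ V < y + g) ∨ 3*g ≤ y) := by
  constructor
  · rintro (h'|h') <;> (unfold Lrel at h'; omega)
  · rintro (rfl|⟨ha, hb, hc⟩|h')
    · exact Or.inr (lr2 (by omega) (by omega))
    · exact Or.inr (lr5 ha hb h1 (by omega) hc)
    · exact Or.inl (lr7 h1 h2 h')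

lemma char_b2 (hg : 2 ≤ g) (h1 : 2*g ≤ V) (h2 : V + 1 = 3*g) :
    (Lrel g V y ∨ Lrel g y V) ↔
      (y = V - 2*g ∨ (g ≤ y ∧ y < 2*g ∧ V < y + g)) := by
  constructor
  · rintro (h'|h') <;> (unfold Lrel at h'; omega)
  · rintro (rfl|⟨ha, hb, hc⟩)
    · exact Or.inr (lr2 (by omega) (by omega))
    · exact Or.inr (lr5 ha hb h1 (by omega) hc)

lemma char_f (hg : 2 ≤ g) (h1 : 3*g ≤ V) :
    (Lrel g V y ∨ Lrel g y V) ↔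
      (y + 1 = g ∨ (g ≤ y ∧ y < 2*g) ∨ (2*g ≤ y ∧ y + 1 < 3*g) ∨ (3*g ≤ y ∧ y ≠ V)) := by
  constructor
  · rintro (h'|h') <;> (unfold Lrel at h'; omega)
  · rintro (ha|⟨ha, hb⟩|⟨ha, hb⟩|⟨ha, hb⟩)
    · exact Or.inr (lr3 ha h1)
    · exact Or.inr (lr6 ha hb h1)
    · exact Or.inr (lr7 ha hb h1)
    · rcases Nat.lt_or_ge y V with hlt | hge
      · exact Or.inr (lr8 ha hlt)
      · exact Or.inl (lr8 h1 (by omega))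

end chars

def degFun (g n V : ℕ) : ℕ :=
  if V + 1 < g then 2
  else if V + 1 = g then 2 + (n - 3*g)
  else if V < 2*g then V + (n - 3*g)
  else if V + 1 < 3*g then (3*g - V) + (n - 3*g)
  else if V < 3*g then 3*g - V
  else 2*g + (n - 3*g) - 1

lemma count_nbrs {g n : ℕ} (hg : 2 ≤ g) (hn : 3*g ≤ n) (V : ℕ) (hV : V < n) :
    ((Finset.range n).filter (fun y => V ≠ y ∧ (Lrel g V y ∨ Lrel g y V))).card
      = degFun g n V := by
  unfold degFun
  split_ifs with h1 h2 h3 h4 h5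
  · have hs : (Finset.range n).filter (fun y => V ≠ y ∧ (Lrel g V y ∨ Lrel g y V))
        = {g + V, 2*g + V} := by
      ext y
      simp only [Finset.mem_filter, Finset.mem_range, Finset.mem_insert, Finset.mem_singleton,
        char_d1 (V := V) hg h1]
      omega
    rw [hs, Finset.card_insert_of_notMem (by simp only [Finset.mem_singleton]; omega),
      Finset.card_singleton]
  · have hs : (Finset.range n).filter (fun y => V ≠ y ∧ (Lrel g V y ∨ Lrel g y V))
        = insert (g + V) (insert (2*g + V) (Finset.Ico (3*g) n)) := by
      ext y
      simp only [Finset.mem_filter, Finset.mem_range, Finset.mem_insert, Finset.mem_Ico,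
        char_d2 (V := V) hg h2]
      omega
    rw [hs, Finset.card_insert_of_notMem (by
        simp only [Finset.mem_insert, Finset.mem_Ico]; omega),
      Finset.card_insert_of_notMem (by simp only [Finset.mem_Ico]; omega), Nat.card_Ico]
    omega
  · have hs : (Finset.range n).filter (fun y => V ≠ y ∧ (Lrel g V y ∨ Lrel g y V))
        = insert (V - g) ((Finset.Ico g (V + g)).erase V ∪ Finset.Ico (3*g) n) := by
      ext y
      simp only [Finset.mem_filter, Finset.mem_range, Finset.mem_insert, Finset.mem_union,
        Finset.mem_erase, Finset.mem_Ico, char_a (V := V) hg (by omega) h3]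
      omega
    rw [hs, Finset.card_insert_of_notMem (by
        simp only [Finset.mem_union, Finset.mem_erase, Finset.mem_Ico]; omega),
      Finset.card_union_of_disjoint (by
        rw [Finset.disjoint_left]
        intro a ha hb
        simp only [Finset.mem_erase, Finset.mem_Ico] at ha hb
        omega),
      Finset.card_erase_of_mem (by simp only [Finset.mem_Ico]; omega), Nat.card_Ico, Nat.card_Ico]
    omega
  · have hs : (Finset.range n).filter (fun y => V ≠ y ∧ (Lrel g V y ∨ Lrel g y V))
        = insert (V - 2*g) (Finset.Ico (V - g + 1) (2*g) ∪ Finset.Ico (3*g) n) := by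
      ext y
      simp only [Finset.mem_filter, Finset.mem_range, Finset.mem_insert, Finset.mem_union,
        Finset.mem_Ico, char_b1 (V := V) hg (by omega) h4]
      omega
    rw [hs, Finset.card_insert_of_notMem (by
        simp only [Finset.mem_union, Finset.mem_Ico]; omega),
      Finset.card_union_of_disjoint (by
        rw [Finset.disjoint_left]
        intro a ha hb
        simp only [Finset.mem_Ico] at ha hb
        omega), Nat.card_Ico, Nat.card_Ico]
    omega
  · have hs : (Finset.range n).filter (fun y => V ≠ y ∧ (Lrel g V y ∨ Lrel g y V))
        = insert (V - 2*g) (Finset.Ico (V - g + 1) (2*g)) := by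
      ext y
      simp only [Finset.mem_filter, Finset.mem_range, Finset.mem_insert, Finset.mem_Ico,
        char_b2 (V := V) hg (by omega) (by omega)]
      omega
    rw [hs, Finset.card_insert_of_notMem (by simp only [Finset.mem_Ico]; omega), Nat.card_Ico]
    omega
  · have hs : (Finset.range n).filter (fun y => V ≠ y ∧ (Lrel g V y ∨ Lrel g y V))
        = insert (g - 1) (Finset.Ico g (3*g - 1) ∪ (Finset.Ico (3*g) n).erase V) := by
      ext y
      simp only [Finset.mem_filter, Finset.mem_range, Finset.mem_insert, Finset.mem_union,
        Finset.mem_erase, Finset.mem_Ico, char_f (V := V) hg (by omega)]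
      omega
    rw [hs, Finset.card_insert_of_notMem (by
        simp only [Finset.mem_union, Finset.mem_erase, Finset.mem_Ico]; omega),
      Finset.card_union_of_disjoint (by
        rw [Finset.disjoint_left]
        intro a ha hb
        simp only [Finset.mem_erase, Finset.mem_Ico] at ha hb
        omega),
      Finset.card_erase_of_mem (by simp only [Finset.mem_Ico]; omega), Nat.card_Ico, Nat.card_Ico]
    omega


lemma degree_eq {g n : ℕ} (hg : 2 ≤ g) (hn : 3*g ≤ n) (v : Fin n) :
    (Gg g n).degree v = degFun g n v.val := by
  have h0 : (Gg g n).degree v = ((Finset.univ : Finset (Fin n)).filter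
      (fun u => (Gg g n).Adj v u)).card := by
    rw [← SimpleGraph.neighborFinset_eq_filter]
    rfl
  rw [h0, Finset.filter_congr (fun u _ => show (Gg g n).Adj v u ↔
      (v.val ≠ u.val ∧ (Lrel g v.val u.val ∨ Lrel g u.val v.val)) from by
    rw [Gg_adj]
    simp [Ne, Fin.ext_iff])]
  rw [card_filter_val n (fun y => v.val ≠ y ∧ (Lrel g v.val y ∨ Lrel g y v.val))]
  exact count_nbrs hg hn v.val v.isLt

lemma sum_degFun {g c : ℕ} (hg : 2 ≤ g) :
    ∑ V ∈ Finset.range (3*g + c), degFun g (3*g + c) V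
      = 2 * (g*(g+1) + 2*g*c + ∑ i ∈ Finset.range c, i) := by
  obtain ⟨G, rfl⟩ : ∃ G, g = G + 2 := ⟨g - 2, by omega⟩
  conv_lhs =>
    rw [Finset.range_eq_Ico,
      ← Finset.sum_Ico_consecutive _ (by omega : 0 ≤ 3*G+6) (by omega : 3*G+6 ≤ 3*(G+2) + c),
      ← Finset.sum_Ico_consecutive _ (by omega : 0 ≤ 2*G+4) (by omega : 2*G+4 ≤ 3*G+6),
      ← Finset.sum_Ico_consecutive _ (by omega : 0 ≤ G+2) (by omega : G+2 ≤ 2*G+4),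
      ← Finset.sum_Ico_consecutive _ (by omega : 0 ≤ G+1) (by omega : G+1 ≤ G+2),
      ← Finset.sum_Ico_consecutive _ (by omega : 2*G+4 ≤ 3*G+5) (by omega : 3*G+5 ≤ 3*G+6)]
  have S0 : ∑ V ∈ Finset.Ico 0 (G+1), degFun (G+2) (3*(G+2) + c) V = 2*(G+1) := by
    rw [Finset.sum_congr rfl (fun V hV => show degFun (G+2) (3*(G+2)+c) V = 2 from by
      rw [Finset.mem_Ico] at hV
      unfold degFun; split_ifs <;> omega)]
    rw [Finset.sum_const, Nat.card_Ico, smul_eq_mul]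
    omega
  have S1 : ∑ V ∈ Finset.Ico (G+1) (G+2), degFun (G+2) (3*(G+2) + c) V = 2 + c := by
    rw [show Finset.Ico (G+1) (G+2) = {G+1} from by ext; simp [Finset.mem_Ico],
      Finset.sum_singleton]
    unfold degFun; split_ifs <;> omega
  have S2 : ∑ V ∈ Finset.Ico (G+2) (2*G+4), degFun (G+2) (3*(G+2) + c) V
      = (G+2)*((G+2)+c) + ∑ i ∈ Finset.range (G+2), i := by
    rw [Finset.sum_Ico_eq_sum_range, show 2*G+4 - (G+2) = G+2 from by omega]
    rw [Finset.sum_congr rfl (fun i hi =>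
      show degFun (G+2) (3*(G+2)+c) ((G+2)+i) = ((G+2)+c) + i from by
        rw [Finset.mem_range] at hi
        unfold degFun; split_ifs <;> omega)]
    rw [Finset.sum_add_distrib, Finset.sum_const, Finset.card_range, smul_eq_mul]
  have S3 : ∑ V ∈ Finset.Ico (2*G+4) (3*G+5), degFun (G+2) (3*(G+2) + c) V
      = (G+1)*(2+c) + ∑ i ∈ Finset.range (G+1), i := by
    rw [Finset.sum_Ico_eq_sum_range, show 3*G+5 - (2*G+4) = G+1 from by omega]
    rw [Finset.sum_congr rfl (fun i hi =>
      show degFun (G+2) (3*(G+2)+c) ((2*G+4)+i) = ((G+2) - i) + c from by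
        rw [Finset.mem_range] at hi
        unfold degFun; split_ifs <;> omega)]
    rw [← Finset.sum_range_reflect]
    rw [Finset.sum_congr rfl (fun i hi =>
      show ((G+2) - (G + 1 - 1 - i)) + c = (2+c) + i from by
        rw [Finset.mem_range] at hi
        omega)]
    rw [Finset.sum_add_distrib, Finset.sum_const, Finset.card_range, smul_eq_mul]
  have S4 : ∑ V ∈ Finset.Ico (3*G+5) (3*G+6), degFun (G+2) (3*(G+2) + c) V = 1 := by
    rw [show Finset.Ico (3*G+5) (3*G+6) = {3*G+5} from by ext; simp [Finset.mem_Ico],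
      Finset.sum_singleton]
    unfold degFun; split_ifs <;> omega
  have S5 : ∑ V ∈ Finset.Ico (3*G+6) (3*(G+2)+c), degFun (G+2) (3*(G+2) + c) V
      = c * (2*G + 3 + c) := by
    rw [Finset.sum_congr rfl (fun V hV =>
      show degFun (G+2) (3*(G+2)+c) V = 2*G + 3 + c from by
        rw [Finset.mem_Ico] at hV
        unfold degFun; split_ifs <;> omega)]
    rw [Finset.sum_const, Nat.card_Ico, smul_eq_mul]
    congr 1
    omega
  rw [S0, S1, S2, S3, S4, S5]
  have t1 : (∑ i ∈ Finset.range (G+2), i) * 2 = (G+2) * (G+1) := by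
    rw [Finset.sum_range_id_mul_two]; congr 1
  have t2 : (∑ i ∈ Finset.range (G+1), i) * 2 = (G+1) * G := by
    rw [Finset.sum_range_id_mul_two]; congr 1
  rcases Nat.eq_zero_or_pos c with rfl | hc1
  · simp only [Finset.range_zero, Finset.sum_empty]
    nlinarith [t1, t2]
  · obtain ⟨C, rfl⟩ : ∃ C, c = C + 1 := ⟨c - 1, by omega⟩
    have t3 : (∑ i ∈ Finset.range (C+1), i) * 2 = (C+1) * C := by
      rw [Finset.sum_range_id_mul_two]; congr 1
    nlinarith [t1, t2, t3]

lemma edge_count {g n : ℕ} (hg : 2 ≤ g) (hn : 3*g ≤ n) :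
    (Gg g n).edgeFinset.card = (n - g).choose 2 - g * (g - 2) := by
  have hdeg : ∑ v : Fin n, (Gg g n).degree v = 2 * (Gg g n).edgeFinset.card :=
    SimpleGraph.sum_degrees_eq_twice_card_edges _
  have h1 : ∑ v : Fin n, (Gg g n).degree v = ∑ V ∈ Finset.range n, degFun g n V := by
    rw [Finset.sum_congr rfl (fun v _ => degree_eq hg hn v)]
    exact Fin.sum_univ_eq_sum_range (fun V => degFun g n V) n
  obtain ⟨c, rfl⟩ : ∃ c, n = 3*g + c := ⟨n - 3*g, by omega⟩
  have h2 := sum_degFun (c := c) hg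
  have hE : (Gg g (3*g+c)).edgeFinset.card
      = g*(g+1) + 2*g*c + ∑ i ∈ Finset.range c, i := by omega
  have hch : (3*g + c - g).choose 2
      = g*(g+1) + 2*g*c + (∑ i ∈ Finset.range c, i) + g * (g - 2) := by
    rw [show 3*g + c - g = 2*g + c from by omega, Nat.choose_two_right]
    have key : (2*g+c) * (2*g+c-1)
        = (g*(g+1) + 2*g*c + (∑ i ∈ Finset.range c, i) + g*(g-2)) * 2 := by
      obtain ⟨G, rfl⟩ : ∃ G, g = G+2 := ⟨g - 2, by omega⟩
      have hs : (∑ i ∈ Finset.range c, i) * 2 = c * (c-1) := Finset.sum_range_id_mul_two c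
      rcases Nat.eq_zero_or_pos c with rfl | hc1
      · simp only [Finset.range_zero, Finset.sum_empty]
        rw [show 2*(G+2)+0-1 = 2*G+3 from by omega, show (G+2)-2 = G from by omega]
        ring
      · obtain ⟨C, rfl⟩ : ∃ C, c = C+1 := ⟨c - 1, by omega⟩
        have hs' : (∑ i ∈ Finset.range (C+1), i) * 2 = (C+1) * C := by
          rw [Finset.sum_range_id_mul_two]; congr 1
        rw [show 2*(G+2)+(C+1)-1 = 2*G+4+C from by omega, show (G+2)-2 = G from by omega]
        nlinarith [hs']
    rw [key, Nat.mul_div_cancel _ (by norm_num : (0:ℕ) < 2)]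
  rw [hE, hch, Nat.add_sub_cancel]


theorem stmt18 (γ n : ℕ) (hγ : 2 ≤ γ) (hn : 3 * γ ≤ n) :
    ∃ (G : SimpleGraph (Fin n)) (D : Finset (Fin n)),
      (∀ v, ∃ u, G.Adj u v) ∧
      IsUMDS G D ∧ D.card = γ ∧
      (∀ u ∈ D, ∀ v ∈ D, ¬ G.Adj u v) ∧
      (∀ v, v ∉ D → ∃! u, u ∈ D ∧ G.Adj u v) ∧
      G.edgeSet.ncard = (n - γ).choose 2 - γ * (γ - 2) := by
  have hn' : 3*γ ≤ n := by omega
  refine ⟨Gg γ n, Finset.univ.filter (fun v : Fin n => v.val < γ), ?_, ?_, ?_, ?_, ?_, ?_⟩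
  · -- no isolated vertices
    intro v
    by_cases hv : v.val < γ
    · refine ⟨⟨γ + v.val, by omega⟩, ?_, Or.inr (lr1 hv rfl)⟩
      intro hEq
      have : γ + v.val = v.val := congrArg Fin.val hEq
      omega
    · exact ⟨_, dom_d (by omega) hn' (by omega)⟩
  · -- IsUMDS
    have hdom : IsDomSet (Gg γ n) (Finset.univ.filter (fun v : Fin n => v.val < γ)) := by
      intro v hv
      simp only [Finset.mem_filter, Finset.mem_univ, true_and, not_lt] at hv
      refine ⟨⟨cellF γ v.val, by have := cellF_lt (g := γ) (by omega) v.val; omega⟩, ?_,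
        dom_d (by omega) hn' hv⟩
      simp only [Finset.mem_filter, Finset.mem_univ, true_and]
      exact cellF_lt (by omega) v.val
    refine ⟨hdom, ?_, ?_⟩
    · intro D' hD'
      rw [cardD (by omega)]
      exact card_lower (by omega) hn' hD'
    · intro D' hD' hcard
      rw [cardD (by omega)] at hcard
      exact unique_min hγ hn' hD' hcard
  · exact cardD (by omega)
  · -- independence
    intro u hu v hv hadj
    simp only [Finset.mem_filter, Finset.mem_univ, true_and] at hu hv
    rcases hadj with ⟨hne, h | h⟩
    · exact Lrel_lower hv h
    · exact Lrel_lower hu h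
  · -- exactly one dominator
    intro v hv
    simp only [Finset.mem_filter, Finset.mem_univ, true_and, not_lt] at hv
    have hc := cellF_lt (g := γ) (by omega) v.val
    refine ⟨⟨cellF γ v.val, by omega⟩, ⟨?_, dom_d (by omega) hn' hv⟩, ?_⟩
    · simp only [Finset.mem_filter, Finset.mem_univ, true_and]
      exact hc
    · rintro u ⟨huD, hadj⟩
      simp only [Finset.mem_filter, Finset.mem_univ, true_and] at huD
      obtain ⟨-, h2⟩ := adj_d huD hadj
      exact Fin.ext h2.symm
  · -- edge count
    have h1 : (Gg γ n).edgeSet.ncard = (Gg γ n).edgeFinset.card := by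
      rw [SimpleGraph.edgeFinset]
      exact Set.ncard_eq_toFinset_card' _
    rw [h1]
    exact edge_count hγ hn'
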